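/- Telescoping unbiasedness (idealized finite-meeting case): let (u^{(t)})_{t≥0} and (ū^{(t)})_{t≥0} be two sequences of random variables with identical marginals, E[h(u^{(t)})] = E[h(ū^{(t)})] for all t, such that E[h(u^{(t)})] → H as t → ∞, and suppose there is an almost surely finite random time τ with u^{(t)} = ū^{(t-L)} for all t ≥ τ, where L ≥ 1 is a fixed lag. If h is bounded and E[τ] < ∞, then the estimator Ĥ = (1/L)·(∑_{t=t₀}^{t₀+L-1} h(u^{(t)}) + ∑_{t=t₀+L}^{τ-1} h(u^{(t)}) - h(ū^{(t-L)})) satisfies E[Ĥ] = H. -/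
import Mathlib


open MeasureTheory

/-- Telescoping unbiasedness of the lagged coupling estimator: if the two chains have
identical marginals in expectation of `h`, the expectations converge to `H`, the chains
meet at an almost surely finite integrable time `τ` and stay together (with lag `L`),
and `h` is bounded, then the coupling estimator is unbiased for `H`. -/
theorem coupling_estimator_unbiased {Ω α : Type*} [MeasureSpace Ω]
    [IsProbabilityMeasure (volume : Measure Ω)] [MeasurableSpace α]
    (u ubar : ℕ → Ω → α)
    (hum : ∀ t, Measurable (u t)) (hubm : ∀ t, Measurable (ubar t))
    (h : α → ℝ) (hhm : Measurable h) (C : ℝ) (hhb : ∀ x, |h x| ≤ C)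
    (H : ℝ) (L t₀ : ℕ) (hL : 1 ≤ L)
    (hmarg : ∀ t, (∫ ω, h (u t ω)) = ∫ ω, h (ubar t ω))
    (hconv : Filter.Tendsto (fun t => ∫ ω, h (u t ω)) Filter.atTop (nhds H))
    (τ : Ω → ℕ) (hτm : Measurable τ)
    (hτint : Integrable (fun ω => (τ ω : ℝ)))
    (hmeet : ∀ ω, ∀ t, τ ω ≤ t → u t ω = ubar (t - L) ω) :
    ∫ ω, (1 / (L : ℝ)) *
        ((∑ t ∈ Finset.Ico t₀ (t₀ + L), h (u t ω)) +
          ∑ t ∈ Finset.Ico (t₀ + L) (τ ω), (h (u t ω) - h (ubar (t - L) ω)))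
      = H := by
  classical
  have hΩ : Nonempty Ω := by
    by_contra hn
    rw [not_nonempty_iff] at hn
    have h1 : (volume : Measure Ω) Set.univ = 1 := measure_univ
    rw [Set.univ_eq_empty_iff.mpr hn, measure_empty] at h1
    exact zero_ne_one h1
  have hC : (0:ℝ) ≤ C := le_trans (abs_nonneg _) (hhb (u 0 (Classical.choice hΩ)))
  have hLpos : (0:ℝ) < (L:ℝ) := by exact_mod_cast hL
  have hint : ∀ (v : ℕ → Ω → α), (∀ t, Measurable (v t)) → ∀ t,
      Integrable (fun ω => h (v t ω)) := by
    intro v hv t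
    refine Integrable.mono' (integrable_const C)
      ((hhm.comp (hv t)).aestronglyMeasurable) ?_
    filter_upwards with ω
    simp [Real.norm_eq_abs, hhb (v t ω)]
  have hIu : ∀ t, Integrable (fun ω => h (u t ω)) := hint u hum
  have hIub : ∀ t, Integrable (fun ω => h (ubar t ω)) := hint ubar hubm
  set a : ℕ → ℝ := fun t => ∫ ω, h (u t ω) with ha
  set F : ℕ → Ω → ℝ := fun N ω => (1/(L:ℝ)) *
    ((∑ t ∈ Finset.Ico t₀ (t₀+L), h (u t ω)) +
      ∑ t ∈ Finset.Ico (t₀+L) N, (h (u t ω) - h (ubar (t-L) ω))) with hF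
  have hS1 : Integrable (fun ω => ∑ t ∈ Finset.Ico t₀ (t₀+L), h (u t ω)) :=
    integrable_finset_sum _ (fun t _ => hIu t)
  have hS2 : ∀ N, Integrable
      (fun ω => ∑ t ∈ Finset.Ico (t₀+L) N, (h (u t ω) - h (ubar (t-L) ω))) :=
    fun N => integrable_finset_sum _ (fun t _ => (hIu t).sub (hIub (t-L)))
  -- measurability
  have hFm : ∀ N, AEStronglyMeasurable (F N) volume := by
    intro N
    apply Measurable.aestronglyMeasurable
    apply Measurable.const_mul
    apply Measurable.add
    · exact Finset.measurable_sum _ (fun t _ => hhm.comp (hum t))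
    · exact Finset.measurable_sum _
        (fun t _ => (hhm.comp (hum t)).sub (hhm.comp (hubm (t-L))))
  -- uniform bound
  have hbd : ∀ N ω, ‖F N ω‖ ≤ (1/(L:ℝ)) * ((L:ℝ)*C + 2*C*(τ ω)) := by
    intro N ω
    rw [Real.norm_eq_abs, hF]
    simp only
    rw [abs_mul, abs_of_pos (by positivity : (0:ℝ) < 1/(L:ℝ))]
    apply mul_le_mul_of_nonneg_left _ (by positivity)
    refine le_trans (abs_add_le _ _) (add_le_add ?_ ?_)
    · refine le_trans (Finset.abs_sum_le_sum_abs _ _) ?_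
      calc ∑ t ∈ Finset.Ico t₀ (t₀+L), |h (u t ω)|
          ≤ ∑ _t ∈ Finset.Ico t₀ (t₀+L), C := Finset.sum_le_sum (fun t _ => hhb _)
        _ = (L:ℝ)*C := by
            rw [Finset.sum_const, Nat.card_Ico]
            simp [mul_comm]
    · refine le_trans (Finset.abs_sum_le_sum_abs _ _) ?_
      have heq : ∑ t ∈ Finset.Ico (t₀+L) N, |h (u t ω) - h (ubar (t-L) ω)|
          = ∑ t ∈ (Finset.Ico (t₀+L) N).filter (fun t => t < τ ω),
              |h (u t ω) - h (ubar (t-L) ω)| := by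
        symm
        apply Finset.sum_filter_of_ne
        intro t _ hne
        by_contra hlt
        push_neg at hlt
        rw [hmeet ω t hlt] at hne
        simp at hne
      rw [heq]
      have hcard : ((Finset.Ico (t₀+L) N).filter (fun t => t < τ ω)).card ≤ τ ω := by
        have hsub : (Finset.Ico (t₀+L) N).filter (fun t => t < τ ω) ⊆
            Finset.range (τ ω) := by
          intro t ht
          rw [Finset.mem_filter] at ht
          exact Finset.mem_range.mpr ht.2
        simpa using Finset.card_le_card hsub
      calc ∑ t ∈ (Finset.Ico (t₀+L) N).filter (fun t => t < τ ω),
              |h (u t ω) - h (ubar (t-L) ω)|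
          ≤ ∑ _t ∈ (Finset.Ico (t₀+L) N).filter (fun t => t < τ ω), (2*C) := by
            apply Finset.sum_le_sum
            intro t _
            calc |h (u t ω) - h (ubar (t-L) ω)| ≤ |h (u t ω)| + |h (ubar (t-L) ω)| :=
                  abs_sub _ _
              _ ≤ C + C := add_le_add (hhb _) (hhb _)
              _ = 2*C := by ring
        _ = ((Finset.Ico (t₀+L) N).filter (fun t => t < τ ω)).card * (2*C) := by
            rw [Finset.sum_const, nsmul_eq_mul]
        _ ≤ (τ ω : ℝ) * (2*C) := by
            apply mul_le_mul_of_nonneg_right _ (by positivity)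
            exact_mod_cast hcard
        _ = 2*C*(τ ω) := by ring
  have hbound_int : Integrable (fun ω => (1/(L:ℝ)) * ((L:ℝ)*C + 2*C*(τ ω))) := by
    exact ((integrable_const ((L:ℝ)*C)).add (hτint.const_mul (2*C))).const_mul _
  -- pointwise limit
  have hptw : ∀ ω, Filter.Tendsto (fun N => F N ω) Filter.atTop
      (nhds ((1/(L:ℝ)) * ((∑ t ∈ Finset.Ico t₀ (t₀+L), h (u t ω)) +
        ∑ t ∈ Finset.Ico (t₀+L) (τ ω), (h (u t ω) - h (ubar (t-L) ω))))) := by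
    intro ω
    refine Filter.Tendsto.congr' ?_ tendsto_const_nhds
    filter_upwards [Filter.eventually_ge_atTop (τ ω)] with N hN
    rw [hF]
    congr 2
    apply Finset.sum_subset
    · exact Finset.Ico_subset_Ico le_rfl hN
    · intro t ht hnt
      have : τ ω ≤ t := by
        rw [Finset.mem_Ico] at ht hnt
        omega
      rw [hmeet ω t this]
      simp
  have hDCT : Filter.Tendsto (fun N => ∫ ω, F N ω) Filter.atTop
      (nhds (∫ ω, (1/(L:ℝ)) * ((∑ t ∈ Finset.Ico t₀ (t₀+L), h (u t ω)) +
        ∑ t ∈ Finset.Ico (t₀+L) (τ ω), (h (u t ω) - h (ubar (t-L) ω))))) := by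
    refine tendsto_integral_of_dominated_convergence _ hFm hbound_int ?_ ?_
    · intro N
      filter_upwards with ω using hbd N ω
    · filter_upwards with ω using hptw ω
  -- value of ∫ F N
  have hiFN : ∀ N, ∫ ω, F N ω = (1/(L:ℝ)) *
      ((∑ t ∈ Finset.Ico t₀ (t₀+L), a t) +
        ∑ t ∈ Finset.Ico (t₀+L) N, (a t - a (t-L))) := by
    intro N
    rw [hF]
    simp only
    have hsub : ∀ t : ℕ, Integrable (fun ω => h (u t ω) - h (ubar (t-L) ω))
        (volume : Measure Ω) := fun t => (hIu t).sub (hIub (t-L))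
    rw [integral_const_mul, integral_add hS1 (hS2 N),
      integral_finset_sum _ (fun t _ => hIu t),
      integral_finset_sum _ (fun t (_ : t ∈ Finset.Ico (t₀+L) N) => hsub t)]
    congr 1
    congr 1
    apply Finset.sum_congr rfl
    intro t _
    rw [integral_sub (hIu t) (hIub (t-L)), ha]
    simp only
    rw [← hmarg (t-L)]
  have htel : ∀ N, t₀ + L ≤ N →
      (∑ t ∈ Finset.Ico t₀ (t₀+L), a t) +
        ∑ t ∈ Finset.Ico (t₀+L) N, (a t - a (t-L)) =
      ∑ t ∈ Finset.Ico (N-L) N, a t := by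
    intro N hN
    rw [Finset.sum_sub_distrib]
    have h1 : ∑ t ∈ Finset.Ico (t₀+L) N, a (t-L) = ∑ t ∈ Finset.Ico t₀ (N-L), a t := by
      rw [Finset.sum_Ico_eq_sum_range, Finset.sum_Ico_eq_sum_range]
      have hc : N - (t₀+L) = N - L - t₀ := by omega
      rw [hc]
      apply Finset.sum_congr rfl
      intro i _
      congr 1
      omega
    rw [h1]
    have h2 : (∑ t ∈ Finset.Ico t₀ (t₀+L), a t) + ∑ t ∈ Finset.Ico (t₀+L) N, a t =
        ∑ t ∈ Finset.Ico t₀ N, a t :=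
      Finset.sum_Ico_consecutive _ (by omega) hN
    have h3 : (∑ t ∈ Finset.Ico t₀ (N-L), a t) + ∑ t ∈ Finset.Ico (N-L) N, a t =
        ∑ t ∈ Finset.Ico t₀ N, a t :=
      Finset.sum_Ico_consecutive _ (by omega) (by omega)
    linarith
  -- limit of window averages
  have hwin : Filter.Tendsto (fun N => (1/(L:ℝ)) * ∑ t ∈ Finset.Ico (N-L) N, a t)
      Filter.atTop (nhds H) := by
    have h2 : ∀ j : ℕ, Filter.Tendsto (fun N => a (N-L+j)) Filter.atTop (nhds H) := by
      intro j
      have ht : Filter.Tendsto (fun N : ℕ => N - L + j) Filter.atTop Filter.atTop :=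
        Filter.tendsto_atTop_atTop.mpr (fun b => ⟨b + L, fun N hN => by omega⟩)
      exact hconv.comp ht
    have h3 : Filter.Tendsto (fun N => ∑ j ∈ Finset.range L, a (N-L+j))
        Filter.atTop (nhds (∑ _j ∈ Finset.range L, H)) :=
      tendsto_finset_sum _ (fun j _ => h2 j)
    have h4 := h3.const_mul (1/(L:ℝ))
    have h5 : (1/(L:ℝ)) * (∑ _j ∈ Finset.range L, H) = H := by
      rw [Finset.sum_const, Finset.card_range, nsmul_eq_mul]
      field_simp
    rw [h5] at h4
    refine h4.congr' ?_
    filter_upwards [Filter.eventually_ge_atTop L] with N hN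
    congr 1
    rw [Finset.sum_Ico_eq_sum_range]
    have hc : N - (N - L) = L := by omega
    rw [hc]
  have hlim2 : Filter.Tendsto (fun N => ∫ ω, F N ω) Filter.atTop (nhds H) := by
    refine hwin.congr' ?_
    filter_upwards [Filter.eventually_ge_atTop (t₀+L)] with N hN
    rw [hiFN N, htel N hN]
  exact tendsto_nhds_unique hDCT hlim2
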